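/- Backward direction of the reduction from Independent Set to Star Degree Centrality: with Ĝ constructed from G = (V,E), |V| = n, as in the reduction (new center s adjacent to all of V, n pendant vertices attached to each i ∈ V, and n² pendant vertices attached to s), if Ĝ contains an induced star Ŝ with |N(Ŝ)| ≥ n² + k·n (where 1 ≤ k ≤ n), then G contains an independent set of size at least k. -/

import Mathlib

/-- Open neighborhood of a set of vertices: vertices outside `S` adjacent to some vertex of `S`. -/
def SimpleGraph.nbhd {V : Type*} (G : SimpleGraph V) (S : Set V) : Set V :=
  {v | v ∉ S ∧ ∃ u ∈ S, G.Adj u v}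

/-- `S` forms an induced star centered at `c`: `c ∈ S`, `c` is adjacent to every other
member of `S`, and no two non-center members of `S` are adjacent. -/
def SimpleGraph.IsInducedStar {V : Type*} (G : SimpleGraph V) (S : Set V) (c : V) : Prop :=
  c ∈ S ∧ (∀ v ∈ S, v ≠ c → G.Adj c v) ∧
    ∀ v ∈ S, ∀ w ∈ S, v ≠ c → w ≠ c → ¬ G.Adj v w

/-- The reduction graph `Ĝ`: the original graph `G` together with a new center `s`
adjacent to every original vertex, `n` pendant vertices attached to each original
vertex, and `n²` pendant vertices attached to `s` (where `n = Fintype.card V`). -/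
def hatGraph {V : Type*} [Fintype V] (G : SimpleGraph V) :
    SimpleGraph (V ⊕ Unit ⊕ (V × Fin (Fintype.card V)) ⊕
      (Fin (Fintype.card V) × Fin (Fintype.card V))) :=
  SimpleGraph.fromRel (fun a b =>
    match a, b with
    | Sum.inl i, Sum.inl j => G.Adj i j
    | Sum.inr (Sum.inl _), Sum.inl _ => True
    | Sum.inl i, Sum.inr (Sum.inr (Sum.inl (j, _))) => i = j
    | Sum.inr (Sum.inl _), Sum.inr (Sum.inr (Sum.inr _)) => True
    | _, _ => False)

/-- The special added center vertex `s` of the reduction graph. -/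
def hatCenter (V : Type*) [Fintype V] :
    V ⊕ Unit ⊕ (V × Fin (Fintype.card V)) ⊕
      (Fin (Fintype.card V) × Fin (Fintype.card V)) :=
  Sum.inr (Sum.inl ())

namespace StarAux

variable {V : Type*} [Fintype V] (G : SimpleGraph V)

abbrev W (V : Type*) [Fintype V] :=
  V ⊕ Unit ⊕ (V × Fin (Fintype.card V)) ⊕ (Fin (Fintype.card V) × Fin (Fintype.card V))

abbrev pend (p : V × Fin (Fintype.card V)) : W V := Sum.inr (Sum.inr (Sum.inl p))

abbrev spend (q : Fin (Fintype.card V) × Fin (Fintype.card V)) : W V :=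
  Sum.inr (Sum.inr (Sum.inr q))

lemma adj_inl_inl {i j : V} :
    (hatGraph G).Adj (Sum.inl i) (Sum.inl j) ↔ G.Adj i j := by
  simp only [hatGraph, SimpleGraph.fromRel_adj]
  constructor
  · rintro ⟨hne, h | h⟩
    · exact h
    · exact h.symm
  · intro h
    exact ⟨fun e => G.irrefl ((Sum.inl.injEq _ _ ▸ e : i = j) ▸ h), Or.inl h⟩

lemma adj_pend {p : V × Fin (Fintype.card V)} {x : W V} :
    (hatGraph G).Adj x (pend p) ↔ x = Sum.inl p.1 := by
  obtain ⟨i, j⟩ := p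
  rcases x with i' | u | ⟨a, b⟩ | q <;>
    simp [hatGraph, SimpleGraph.fromRel_adj]

lemma adj_spend {q : Fin (Fintype.card V) × Fin (Fintype.card V)} {x : W V} :
    (hatGraph G).Adj x (spend q) ↔ x = hatCenter V := by
  rcases x with i' | u | ⟨a, b⟩ | q' <;>
    simp [hatGraph, hatCenter, SimpleGraph.fromRel_adj]

lemma adj_s {x : W V} :
    (hatGraph G).Adj x (hatCenter V) ↔ (∃ i, x = Sum.inl i) ∨ ∃ q, x = spend q := by
  rcases x with i' | u | ⟨a, b⟩ | q' <;>
    simp [hatGraph, hatCenter, SimpleGraph.fromRel_adj]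

lemma adj_s_inl (i : V) : (hatGraph G).Adj (hatCenter V) (Sum.inl i) := by
  simp [hatGraph, hatCenter, SimpleGraph.fromRel_adj]

lemma pend_inj : Function.Injective (pend (V := V)) := by
  intro a b h; simpa using h

lemma spend_inj : Function.Injective (spend (V := V)) := by
  intro a b h; simpa using h

lemma ncard_range_inl :
    (Set.range (Sum.inl : V → W V)).ncard = Fintype.card V := by
  have h := Nat.card_range_of_injective
    (Sum.inl_injective : Function.Injective (Sum.inl : V → W V))
  rw [Nat.card_coe_set_eq] at h
  rw [h, Nat.card_eq_fintype_card]

lemma ncard_range_spend :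
    (Set.range (spend (V := V))).ncard = Fintype.card V ^ 2 := by
  have h := Nat.card_range_of_injective (spend_inj (V := V))
  rw [Nat.card_coe_set_eq] at h
  rw [h, Nat.card_eq_fintype_card]
  simp [sq]

lemma ncard_pend_image (T : Set V) :
    ((pend (V := V)) '' (T ×ˢ (Set.univ : Set (Fin (Fintype.card V))))).ncard
      = T.ncard * Fintype.card V := by
  rw [Set.ncard_image_of_injective _ pend_inj, ← Nat.card_coe_set_eq,
    Nat.card_congr (Equiv.Set.prod T Set.univ), Nat.card_prod,
    Nat.card_coe_set_eq, Nat.card_coe_set_eq, Set.ncard_univ,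
    Nat.card_eq_fintype_card, Fintype.card_fin]

end StarAux

open StarAux in
theorem stmt_5 {V : Type*} [Fintype V] (G : SimpleGraph V) (k : ℕ)
    (hn : 1 ≤ Fintype.card V) (hk1 : 1 ≤ k) (hkn : k ≤ Fintype.card V)
    (hstar : ∃ Shat c, (hatGraph G).IsInducedStar Shat c ∧
      Fintype.card V ^ 2 + k * Fintype.card V ≤ ((hatGraph G).nbhd Shat).ncard) :
    ∃ S : Set V, (∀ i ∈ S, ∀ j ∈ S, ¬ G.Adj i j) ∧ k ≤ S.ncard := by
  classical
  rcases eq_or_lt_of_le hk1 with hk | hk2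
  · -- k = 1 : any single vertex works
    obtain ⟨v0⟩ : Nonempty V := Fintype.card_pos_iff.mp hn
    refine ⟨{v0}, ?_, ?_⟩
    · rintro i hi j hj
      rw [Set.mem_singleton_iff] at hi hj
      subst hi; subst hj
      exact G.irrefl
    · rw [Set.ncard_singleton]; omega
  have hn2 : 2 ≤ Fintype.card V := le_trans hk2 hkn
  obtain ⟨Shat, c, ⟨hcS, hstar2, hstar3⟩, hcount⟩ := hstar
  have htn : {i : V | Sum.inl i ∈ Shat}.ncard ≤ Fintype.card V := by
    have := Set.ncard_le_ncard (Set.subset_univ {i : V | Sum.inl i ∈ Shat}) (Set.toFinite _)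
    simpa [Set.ncard_univ, Nat.card_eq_fintype_card] using this
  have hmul2 : 2 * Fintype.card V ≤ k * Fintype.card V :=
    Nat.mul_le_mul_right _ hk2
  by_cases hsS : hatCenter V ∈ Shat
  · -- the additional center `s` belongs to the star
    have hsub : (hatGraph G).nbhd Shat ⊆
        ((Set.range (Sum.inl : V → W V) \ (Sum.inl '' {i : V | Sum.inl i ∈ Shat}))
          ∪ Set.range (spend (V := V)))
          ∪ ((pend (V := V)) '' ({i : V | Sum.inl i ∈ Shat} ×ˢ Set.univ)) := by
      rintro v ⟨hvn, u, hu, hadj⟩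
      rcases v with i | u' | p | q
      · refine Or.inl (Or.inl ⟨⟨i, rfl⟩, ?_⟩)
        rintro ⟨j, hj, hje⟩
        exact hvn (by rwa [show j = i from Sum.inl_injective hje] at hj)
      · cases u'; exact absurd hsS hvn
      · have h := (adj_pend G).mp hadj
        subst h
        exact Or.inr ⟨p, ⟨hu, trivial⟩, rfl⟩
      · exact Or.inl (Or.inr ⟨q, rfl⟩)
    have hb := le_trans hcount (Set.ncard_le_ncard hsub (Set.toFinite _))
    have hb2 : Fintype.card V ^ 2 + k * Fintype.card V ≤
        (Fintype.card V - {i : V | Sum.inl i ∈ Shat}.ncard) + Fintype.card V ^ 2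
          + {i : V | Sum.inl i ∈ Shat}.ncard * Fintype.card V := by
      refine le_trans hb (le_trans (Set.ncard_union_le _ _) ?_)
      have h3 := Set.ncard_union_le
        (Set.range (Sum.inl : V → W V) \ (Sum.inl '' {i : V | Sum.inl i ∈ Shat}))
        (Set.range (spend (V := V)))
      have h4 : (Set.range (Sum.inl : V → W V)
          \ (Sum.inl '' {i : V | Sum.inl i ∈ Shat})).ncard
          = Fintype.card V - {i : V | Sum.inl i ∈ Shat}.ncard := by
        rw [Set.ncard_diff (Set.image_subset_range _ _) (Set.toFinite _), ncard_range_inl,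
          Set.ncard_image_of_injective _ Sum.inl_injective]
      rw [ncard_pend_image]
      rw [h4, ncard_range_spend] at h3
      exact add_le_add_left h3 _
    rcases c with i0 | u | p | q
    · -- center of the star is an original vertex : at most one original vertex in Shat
      exfalso
      have hsub3 : {i : V | Sum.inl i ∈ Shat} ⊆ {i0} := by
        intro i hi
        simp only [Set.mem_singleton_iff]
        by_contra hne
        exact hstar3 _ hsS _ hi (by simp [hatCenter]) (by simpa using hne) (adj_s_inl G i)
      have htt : {i : V | Sum.inl i ∈ Shat}.ncard ≤ 1 := by
        simpa using Set.ncard_le_ncard hsub3 (Set.toFinite _)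
      have h01 : {i : V | Sum.inl i ∈ Shat}.ncard = 0
          ∨ {i : V | Sum.inl i ∈ Shat}.ncard = 1 := by omega
      rcases h01 with h0 | h1
      · rw [h0] at hb2
        simp only [Nat.sub_zero, zero_mul, add_zero] at hb2
        linarith
      · rw [h1] at hb2
        have hs1 : Fintype.card V - 1 + 1 = Fintype.card V := by omega
        linarith
    · -- center of the star is `s` : the original vertices of Shat are independent
      cases u
      refine ⟨{i : V | Sum.inl i ∈ Shat}, ?_, ?_⟩
      · rintro i hi j hj hadj
        exact hstar3 _ hi _ hj (by simp [hatCenter]) (by simp [hatCenter])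
          ((adj_inl_inl G).mpr hadj)
      · by_contra hlt
        push_neg at hlt
        have hzb : {i : V | Sum.inl i ∈ Shat}.ncard + 1 ≤ k := hlt
        have hmulN : {i : V | Sum.inl i ∈ Shat}.ncard * Fintype.card V + Fintype.card V
            ≤ k * Fintype.card V := by
          have := Nat.mul_le_mul_right (Fintype.card V) hzb
          rwa [add_mul, one_mul] at this
        zify [htn] at hb2
        zify at hmulN hmul2 hn2
        have h10 : (({i : V | Sum.inl i ∈ Shat}.ncard : ℤ)) ≤ 0 := by linarith
        have h11 : (({i : V | Sum.inl i ∈ Shat}.ncard : ℤ)) = 0 :=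
          le_antisymm h10 (by positivity)
        rw [h11] at hb2
        linarith
    · -- center of the star is a pendant of an original vertex : impossible
      exfalso
      have hne : hatCenter V ≠ pend p := by simp [hatCenter]
      have h := hstar2 _ hsS hne
      have h2 := (adj_s G).mp h
      simp at h2
    · -- center of the star is a pendant of `s` : no original vertex in Shat
      exfalso
      have hT0 : {i : V | Sum.inl i ∈ Shat}.ncard = 0 := by
        have hsub0 : {i : V | Sum.inl i ∈ Shat} ⊆ (∅ : Set V) := by
          intro i hi
          have hne : (Sum.inl i : W V) ≠ spend q := by simp
          have h := hstar2 _ hi hne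
          have h2 := (adj_spend G).mp h.symm
          simp [hatCenter] at h2
        simpa using Set.ncard_le_ncard hsub0 (Set.toFinite _)
      rw [hT0] at hb2
      simp only [Nat.sub_zero, zero_mul, add_zero] at hb2
      linarith
  · -- the additional center `s` is not in the star
    have hsub : (hatGraph G).nbhd Shat ⊆
        ((Set.range (Sum.inl : V → W V)) ∪ {hatCenter V})
          ∪ ((pend (V := V)) '' ({i : V | Sum.inl i ∈ Shat} ×ˢ Set.univ)) := by
      rintro v ⟨hvn, u, hu, hadj⟩
      rcases v with i | u' | p | q
      · exact Or.inl (Or.inl ⟨i, rfl⟩)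
      · cases u'
        exact Or.inl (Or.inr rfl)
      · have h := (adj_pend G).mp hadj
        subst h
        exact Or.inr ⟨p, ⟨hu, trivial⟩, rfl⟩
      · exfalso
        have h := (adj_spend G).mp hadj
        subst h
        exact hsS hu
    have hb := le_trans hcount (Set.ncard_le_ncard hsub (Set.toFinite _))
    have hb2 : Fintype.card V ^ 2 + k * Fintype.card V ≤
        Fintype.card V + 1 + {i : V | Sum.inl i ∈ Shat}.ncard * Fintype.card V := by
      refine le_trans hb (le_trans (Set.ncard_union_le _ _) ?_)
      have h3 := Set.ncard_union_le (Set.range (Sum.inl : V → W V))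
        ({hatCenter V} : Set (W V))
      rw [ncard_range_inl, Set.ncard_singleton] at h3
      rw [ncard_pend_image]
      exact add_le_add_left h3 _
    have hTS : {i : V | Sum.inl i ∈ Shat}.ncard ≤
        {i : V | Sum.inl i ∈ Shat ∧ (Sum.inl i : W V) ≠ c}.ncard + 1 := by
      have hsub2 : {i : V | Sum.inl i ∈ Shat} ⊆
          {i : V | Sum.inl i ∈ Shat ∧ (Sum.inl i : W V) ≠ c}
            ∪ {i : V | (Sum.inl i : W V) = c} := by
        intro i hi
        by_cases h : (Sum.inl i : W V) = c
        · exact Or.inr h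
        · exact Or.inl ⟨hi, h⟩
      refine le_trans (Set.ncard_le_ncard hsub2 (Set.toFinite _)) ?_
      refine le_trans (Set.ncard_union_le _ _) ?_
      have h1 : {i : V | (Sum.inl i : W V) = c}.ncard ≤ 1 := by
        rw [Set.ncard_le_one (Set.toFinite _)]
        intro a ha b hb
        exact Sum.inl_injective ((ha : _ = c).trans (hb : _ = c).symm)
      omega
    refine ⟨{i : V | Sum.inl i ∈ Shat ∧ (Sum.inl i : W V) ≠ c}, ?_, ?_⟩
    · rintro i ⟨hi, hic⟩ j ⟨hj, hjc⟩ hadj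
      exact hstar3 _ hi _ hj hic hjc ((adj_inl_inl G).mpr hadj)
    · by_contra hlt
      push_neg at hlt
      have ht1 : {i : V | Sum.inl i ∈ Shat}.ncard ≤ k := by omega
      have hmulT : {i : V | Sum.inl i ∈ Shat}.ncard * Fintype.card V ≤ k * Fintype.card V :=
        Nat.mul_le_mul_right _ ht1
      have hnn : 2 * Fintype.card V ≤ Fintype.card V * Fintype.card V :=
        Nat.mul_le_mul_right _ hn2
      have hsq : Fintype.card V ^ 2 = Fintype.card V * Fintype.card V := by ring
      linarith
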